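/- Let n ≥ 1 and let the triangular array {t_{i,j}} lie in S^λ (type A_n). Then the sum of the leftmost entries of all rows satisfies Σ_{k=1}^{n} t_{k,n+1−k} ≤ n·(λ_1 + λ_2 + ⋯ + λ_n). -/

import Mathlib

open Finset

/-- Type A_n case of Proposition 3.6: for a triangular array `t` in `S^λ`
(type A_n), the sum of the leftmost entries of all rows is bounded by
`n * (λ_1 + ⋯ + λ_n)`.  Here `c(t_{i,j}) = ∑_{k=i}^n t_{k,j}` is written out
explicitly as a sum. -/
theorem adapted_string_leftmost_sum_bound_typeA
    (n : ℕ) (hn : 1 ≤ n) (lam : ℕ → ℤ) (t : ℕ → ℕ → ℤ)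
    (hlam : ∀ j, 1 ≤ j → j ≤ n → 0 ≤ lam j)
    (ht : ∀ i j, 0 ≤ t i j)
    (hsupp : ∀ i j, ¬(1 ≤ i ∧ i ≤ n ∧ n + 1 - i ≤ j ∧ j ≤ n) → t i j = 0)
    (hmono : ∀ i j, 1 ≤ i → i ≤ n → n + 1 - i ≤ j → j < n →
      t i (j + 1) ≤ t i j)
    (hineq : ∀ i j, 1 ≤ i → i ≤ n → n + 1 - i ≤ j → j ≤ n →
      t i j ≤ lam j + (∑ k ∈ Icc (i + 1) n, t k (j - 1))
        - 2 * (∑ k ∈ Icc (i + 1) n, t k j)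
        + (∑ k ∈ Icc i n, t k (j + 1))) :
    (∑ k ∈ Icc 1 n, t k (n + 1 - k)) ≤ (n : ℤ) * ∑ j ∈ Icc 1 n, lam j := by
  set c : ℕ → ℕ → ℤ := fun i j => ∑ k ∈ Icc i n, t k j with hc
  have hsplit : ∀ i j, i ≤ n → c i j = t i j + c (i + 1) j := by
    intro i j hi
    simp only [hc]
    rw [Finset.Icc_eq_cons_Ioc hi, Finset.sum_cons, ← Finset.Icc_add_one_left_eq_Ioc]
  have hczero : ∀ j, c (n + 1) j = 0 := by
    intro j
    simp only [hc]
    rw [Finset.Icc_eq_empty (by omega : ¬ n + 1 ≤ n), Finset.sum_empty]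
  have hctop : c 1 (n + 1) = 0 := by
    simp only [hc]
    exact Finset.sum_eq_zero fun k hk => hsupp _ _ (by omega)
  -- key diagonal bound : D i j ≤ ∑_{l=i+j-n}^{j} lam l
  have key : ∀ d i j, n ≤ i + d → 1 ≤ i → i ≤ n → n + 1 - i ≤ j → j ≤ n →
      c i j - c i (j + 1) ≤ ∑ l ∈ Icc (i + j - n) j, lam l := by
    intro d
    induction d with
    | zero =>
      intro i j h0 h1 h2 h3 h4
      have hi : i = n := by omega
      have h := hineq i j h1 h2 h3 h4
      rw [Finset.Icc_eq_empty (by omega : ¬ i + 1 ≤ n),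
        show Icc i n = {i} from by rw [hi, Finset.Icc_self]] at h
      simp only [Finset.sum_empty, Finset.sum_singleton] at h
      simp only [hc]
      rw [show Icc i n = {i} from by rw [hi, Finset.Icc_self]]
      simp only [Finset.sum_singleton]
      rw [show i + j - n = j from by omega, Finset.Icc_self, Finset.sum_singleton]
      linarith
    | succ d ih =>
      intro i j h0 h1 h2 h3 h4
      by_cases hi : i = n
      · exact ih i j (by omega) h1 h2 h3 h4
      · have h5 : i + 1 ≤ n := by omega
        have hineq' := hineq i j h1 h2 h3 h4
        have e1 : (∑ k ∈ Icc (i + 1) n, t k (j - 1)) = c (i + 1) (j - 1) := by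
          simp only [hc]
        have e2 : (∑ k ∈ Icc (i + 1) n, t k j) = c (i + 1) j := by
          simp only [hc]
        have e3 : (∑ k ∈ Icc i n, t k (j + 1)) = c i (j + 1) := by
          simp only [hc]
        rw [e1, e2, e3] at hineq'
        have hsp := hsplit i j h2
        have hj1 : j - 1 + 1 = j := by omega
        have hIH := ih (i + 1) (j - 1) (by omega) (by omega) h5 (by omega) (by omega)
        rw [hj1, show i + 1 + (j - 1) - n = i + j - n from by omega] at hIH
        have hsum : ∑ l ∈ Icc (i + j - n) j, lam l
            = (∑ l ∈ Icc (i + j - n) (j - 1), lam l) + lam j := by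
          conv_lhs => rw [← hj1]
          rw [Finset.sum_Icc_succ_top (by omega), hj1]
        linarith
  -- rewrite the target sum as a sum of horizontal differences
  have hterm : ∀ k ∈ Icc 1 n, t k (n + 1 - k)
      = c k (n + 1 - k) - c (k + 1) (n + 1 - k) := by
    intro k hk
    obtain ⟨hk1, hk2⟩ := Finset.mem_Icc.mp hk
    have := hsplit k (n + 1 - k) hk2
    linarith
  have hL : ∑ k ∈ Icc 1 n, c (k + 1) (n + 1 - k)
      = ∑ k ∈ Icc 2 (n + 1), c k (n + 2 - k) := by
    rw [show Icc 2 (n + 1) = (Icc 1 n).map (addRightEmbedding 1) from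
      (Finset.map_add_right_Icc 1 n 1).symm, Finset.sum_map]
    exact Finset.sum_congr rfl fun k hk => by
      simp only [addRightEmbedding_apply]
      congr 1
      omega
  have hR : ∑ k ∈ Icc 1 n, c k (n + 2 - k)
      = ∑ k ∈ Icc 2 (n + 1), c k (n + 2 - k) := by
    rw [Finset.Icc_eq_cons_Ioc hn, Finset.sum_cons, ← Finset.Icc_add_one_left_eq_Ioc, show (1 : ℕ) + 1 = 2 from rfl,
      show n + 2 - 1 = n + 1 from by omega, hctop, zero_add,
      Finset.sum_Icc_succ_top (by omega : 2 ≤ n + 1),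
      show n + 2 - (n + 1) = 1 from by omega, hczero, add_zero]
  have step1 : ∑ k ∈ Icc 1 n, t k (n + 1 - k)
      = ∑ k ∈ Icc 1 n, (c k (n + 1 - k) - c k (n + 2 - k)) := by
    rw [Finset.sum_congr rfl hterm, Finset.sum_sub_distrib, Finset.sum_sub_distrib, hL, hR]
  rw [step1]
  have bound : ∀ k ∈ Icc 1 n,
      c k (n + 1 - k) - c k (n + 2 - k) ≤ ∑ l ∈ Icc 1 n, lam l := by
    intro k hk
    obtain ⟨hk1, hk2⟩ := Finset.mem_Icc.mp hk
    have h := key n k (n + 1 - k) (by omega) hk1 hk2 le_rfl (by omega)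
    rw [show n + 1 - k + 1 = n + 2 - k from by omega] at h
    refine h.trans (Finset.sum_le_sum_of_subset_of_nonneg ?_ ?_)
    · intro l hl
      rw [Finset.mem_Icc] at *
      omega
    · intro l hl _
      rw [Finset.mem_Icc] at hl
      exact hlam l hl.1 hl.2
  calc ∑ k ∈ Icc 1 n, (c k (n + 1 - k) - c k (n + 2 - k))
      ≤ ∑ _k ∈ Icc 1 n, (∑ l ∈ Icc 1 n, lam l) := Finset.sum_le_sum bound
    _ = (n : ℤ) * ∑ l ∈ Icc 1 n, lam l := by
        rw [Finset.sum_const, Nat.card_Icc]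
        simp [nsmul_eq_mul]
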